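/- arXiv:nlin/0511068 — 3 statements merged into one kernel-verified Lean document; each statement's English description precedes it below -/
import Mathlib

section
/- Let f_n(x) = Σ_{m=1}^M a_{n,m} e^{k_m x} with N ≤ M. Then Wr(f_1,…,f_N)(x) = Σ_{1 ≤ m_1 < ⋯ < m_N ≤ M} V(m_1,…,m_N) · A(m_1,…,m_N) · exp(k_{m_1}x + ⋯ + k_{m_N}x), where A(m_1,…,m_N) is the N×N minor of A from columns m_1,…,m_N and V(m_1,…,m_N) = Π_{s_1<s_2} (k_{m_{s_2}} − k_{m_{s_1}}) is the Vandermonde determinant. -/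
open scoped Classical

open Finset Matrix

/-- Iterated derivative of a finite sum of exponentials. -/
lemma iteratedDeriv_sum_exp {M : ℕ} (c k : Fin M → ℝ) (i : ℕ) (x : ℝ) :
    iteratedDeriv i (fun z => ∑ m, c m * Real.exp (k m * z)) x
      = ∑ m, c m * (k m ^ i * Real.exp (k m * x)) := by
  induction i generalizing x with
  | zero => simp
  | succ n ih =>
    rw [iteratedDeriv_succ]
    have hEq : deriv (iteratedDeriv n fun z => ∑ m, c m * Real.exp (k m * z)) x
        = deriv (fun y => ∑ m, c m * (k m ^ n * Real.exp (k m * y))) x := by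
      apply Filter.EventuallyEq.deriv_eq
      filter_upwards with y using ih y
    rw [hEq]
    have h : HasDerivAt (fun y => ∑ m, c m * (k m ^ n * Real.exp (k m * y)))
        (∑ m, c m * (k m ^ (n + 1) * Real.exp (k m * x))) x := by
      apply HasDerivAt.fun_sum
      intro m _
      have h0 : HasDerivAt (fun y => k m * y) (k m) x := by
        simpa using (hasDerivAt_id x).const_mul (k m)
      have h1 : HasDerivAt (fun y => Real.exp (k m * y))
          (Real.exp (k m * x) * k m) x := (Real.hasDerivAt_exp (k m * x)).comp x h0
      have h2 := (h1.const_mul (k m ^ n)).const_mul (c m)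
      convert h2 using 1
      rfl
      ring
    rw [h.deriv]

/-- The cardinality of the image of an injective map `Fin N → Fin M`. -/
lemma card_image_inj {N M : ℕ} (f : Fin N → Fin M) (hf : Function.Injective f) :
    (Finset.univ.image f).card = N := by
  rw [Finset.card_image_of_injective _ hf, Finset.card_univ, Fintype.card_fin]

/-- The strictly monotone map with the same range as an injective `f`. -/
noncomputable def CBs {N M : ℕ} (f : Fin N → Fin M) (hf : Function.Injective f) :
    Fin N → Fin M :=
  ⇑((Finset.univ.image f).orderEmbOfFin (card_image_inj f hf))

lemma CBs_mono {N M : ℕ} (f : Fin N → Fin M) (hf : Function.Injective f) :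
    StrictMono (CBs f hf) :=
  ((Finset.univ.image f).orderEmbOfFin (card_image_inj f hf)).strictMono

/-- The permutation sorting an injective map. -/
noncomputable def CBσ {N M : ℕ} (f : Fin N → Fin M) (hf : Function.Injective f) :
    Equiv.Perm (Fin N) :=
  Equiv.ofBijective
    (fun i => ((Finset.univ.image f).orderIsoOfFin (card_image_inj f hf)).symm
      ⟨f i, Finset.mem_image_of_mem f (Finset.mem_univ i)⟩)
    (by
      rw [← Finite.injective_iff_bijective]
      intro a b hab
      have := congrArg
        (fun t => (((Finset.univ.image f).orderIsoOfFin (card_image_inj f hf)) t : Fin M)) hab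
      simp only [OrderIso.apply_symm_apply] at this
      exact hf this)

lemma CBs_comp_CBσ {N M : ℕ} (f : Fin N → Fin M) (hf : Function.Injective f) :
    CBs f hf ∘ CBσ f hf = f := by
  funext i
  show ((Finset.univ.image f).orderEmbOfFin (card_image_inj f hf))
      (((Finset.univ.image f).orderIsoOfFin (card_image_inj f hf)).symm
        ⟨f i, Finset.mem_image_of_mem f (Finset.mem_univ i)⟩) = f i
  rw [← Finset.coe_orderIsoOfFin_apply]
  simp

/-- Uniqueness of the (strictly monotone, permutation) factorization. -/
lemma CB_uniq {N M : ℕ} {s s' : Fin N → Fin M} (hs : StrictMono s) (hs' : StrictMono s')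
    {σ σ' : Equiv.Perm (Fin N)} (h : s ∘ σ = s' ∘ σ') : s = s' ∧ σ = σ' := by
  have hcard : (Finset.univ.image (s ∘ σ)).card = N :=
    card_image_inj _ (hs.injective.comp σ.injective)
  have hmem : ∀ x, s x ∈ Finset.univ.image (s ∘ σ) := fun x =>
    Finset.mem_image.mpr ⟨σ.symm x, Finset.mem_univ _, by simp⟩
  have hmem' : ∀ x, s' x ∈ Finset.univ.image (s ∘ σ) := fun x => by
    rw [show Finset.univ.image (s ∘ σ) = Finset.univ.image (s' ∘ σ') from by rw [h]]
    exact Finset.mem_image.mpr ⟨σ'.symm x, Finset.mem_univ _, by simp⟩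
  have hss : s = s' := by
    rw [Finset.orderEmbOfFin_unique hcard hmem hs, Finset.orderEmbOfFin_unique hcard hmem' hs']
  subst hss
  refine ⟨rfl, ?_⟩
  ext i
  exact congrArg Fin.val (hs.injective (congrFun h i))

/-- Cauchy–Binet formula. -/
lemma cauchy_binet {N M : ℕ} (B : Matrix (Fin N) (Fin M) ℝ) (C : Matrix (Fin M) (Fin N) ℝ) :
    (B * C).det = ∑ s ∈ Finset.univ.filter (fun s : Fin N → Fin M => StrictMono s),
      (B.submatrix id s).det * (C.submatrix s id).det := by
  -- Step 1: expand by multilinearity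
  have h1 : (B * C).det = ∑ f : Fin N → Fin M,
      (∏ i, B i (f i)) * (C.submatrix f id).det := by
    have hrw : (B * C).det = Matrix.detRowAlternating (fun i => ∑ m, B i m • C m) := by
      congr 1
      ext i j
      simp [Matrix.mul_apply]
    rw [hrw]
    rw [show (Matrix.detRowAlternating (fun i => ∑ m, B i m • C m) : ℝ)
        = (Matrix.detRowAlternating).toMultilinearMap (fun i => ∑ m, B i m • C m) from rfl]
    rw [MultilinearMap.map_sum]
    refine Finset.sum_congr rfl fun f _ => ?_
    rw [MultilinearMap.map_smul_univ]
    rfl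
  rw [h1]
  -- Step 2: non-injective terms vanish
  have h2 : ∑ f : Fin N → Fin M, (∏ i, B i (f i)) * (C.submatrix f id).det
      = ∑ f ∈ Finset.univ.filter (fun f : Fin N → Fin M => Function.Injective f),
          (∏ i, B i (f i)) * (C.submatrix f id).det := by
    symm
    apply Finset.sum_subset (Finset.filter_subset _ _)
    intro f _ hfn
    have hni : ¬ Function.Injective f := by
      intro h; exact hfn (Finset.mem_filter.mpr ⟨Finset.mem_univ _, h⟩)
    rw [Function.not_injective_iff] at hni
    obtain ⟨i, j, hij, hne⟩ := hni
    have : (C.submatrix f id).det = 0 := by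
      apply Matrix.det_zero_of_row_eq hne
      funext l
      simp [Matrix.submatrix_apply, hij]
    rw [this, mul_zero]
  rw [h2]
  -- Step 3: reindex injective maps by (strictMono, permutation)
  have h3 : ∑ f ∈ Finset.univ.filter (fun f : Fin N → Fin M => Function.Injective f),
        (∏ i, B i (f i)) * (C.submatrix f id).det
      = ∑ p ∈ (Finset.univ.filter (fun s : Fin N → Fin M => StrictMono s)) ×ˢ
            (Finset.univ : Finset (Equiv.Perm (Fin N))),
          (∏ i, B i ((p.1 ∘ p.2) i)) * (C.submatrix (p.1 ∘ p.2) id).det := by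
    have hinj : ∀ f : Fin N → Fin M,
        f ∈ Finset.univ.filter (fun f : Fin N → Fin M => Function.Injective f) →
        Function.Injective f := fun f hf => (Finset.mem_filter.mp hf).2
    refine Finset.sum_bij'
      (i := fun f hf => (CBs f (hinj f hf), CBσ f (hinj f hf)))
      (j := fun p _ => p.1 ∘ p.2) ?_ ?_ ?_ ?_ ?_
    · intro f hf
      simp only [Finset.mem_product, Finset.mem_filter, Finset.mem_univ, true_and, and_true]
      exact CBs_mono f (hinj f hf)
    · intro p hp
      simp only [Finset.mem_product, Finset.mem_filter, Finset.mem_univ, true_and,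
        and_true] at hp
      exact Finset.mem_filter.mpr ⟨Finset.mem_univ _, hp.injective.comp p.2.injective⟩
    · intro f hf
      exact CBs_comp_CBσ f (hinj f hf)
    · intro p hp
      simp only [Finset.mem_product, Finset.mem_filter, Finset.mem_univ, true_and,
        and_true] at hp
      obtain ⟨s, σ⟩ := p
      have hinj : Function.Injective (s ∘ σ) := hp.injective.comp σ.injective
      have h := CB_uniq (CBs_mono (s ∘ σ) hinj) hp (CBs_comp_CBσ (s ∘ σ) hinj)
      exact Prod.ext h.1 h.2
    · intro f hf
      have hc := CBs_comp_CBσ f (hinj f hf)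
      show (∏ i, B i (f i)) * (C.submatrix f id).det
          = (∏ i, B i ((CBs f (hinj f hf) ∘ CBσ f (hinj f hf)) i))
            * (C.submatrix (CBs f (hinj f hf) ∘ CBσ f (hinj f hf)) id).det
      rw [hc]
  rw [h3, Finset.sum_product]
  -- Step 4: evaluate the inner sum over permutations
  refine Finset.sum_congr rfl fun s hs => ?_
  have hdet : ∀ σ : Equiv.Perm (Fin N), (C.submatrix (s ∘ σ) id).det
      = ((Equiv.Perm.sign σ : ℤ) : ℝ) * (C.submatrix s id).det := by
    intro σ
    have : C.submatrix (s ∘ σ) id = (C.submatrix s id).submatrix σ id := by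
      ext i j; simp [Matrix.submatrix_apply]
    rw [this, Matrix.det_permute]
  have hB : (B.submatrix id s).det
      = ∑ σ : Equiv.Perm (Fin N), ((Equiv.Perm.sign σ : ℤ) : ℝ) * ∏ i, B i (s (σ i)) := by
    rw [← Matrix.det_transpose, Matrix.det_apply']
    refine Finset.sum_congr rfl fun σ _ => ?_
    rfl
  calc ∑ σ : Equiv.Perm (Fin N), (∏ i, B i ((s ∘ σ) i)) * (C.submatrix (s ∘ σ) id).det
      = ∑ σ : Equiv.Perm (Fin N),
          (((Equiv.Perm.sign σ : ℤ) : ℝ) * ∏ i, B i (s (σ i))) * (C.submatrix s id).det := by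
        refine Finset.sum_congr rfl fun σ _ => ?_
        simp only [Function.comp_apply]
        rw [hdet σ]; ring
    _ = (B.submatrix id s).det * (C.submatrix s id).det := by
        rw [hB, Finset.sum_mul]

/-- Product over ordered pairs equals iterated product over `Ioi`. -/
lemma prod_pairs {N : ℕ} (g : Fin N → Fin N → ℝ) :
    ∏ p ∈ Finset.univ.filter (fun p : Fin N × Fin N => p.1 < p.2), g p.1 p.2
    = ∏ i, ∏ j ∈ Finset.Ioi i, g i j := by
  rw [Finset.prod_sigma']
  refine Finset.prod_nbij' (fun p => ⟨p.1, p.2⟩) (fun p => (p.1, p.2)) ?_ ?_ ?_ ?_ ?_ <;>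
    simp +contextual [Finset.mem_sigma, Finset.mem_Ioi, Finset.mem_filter]

/-- Determinant of the exponential-weighted Vandermonde matrix. -/
lemma vandermonde_exp_det {N M : ℕ} (k : Fin M → ℝ) (x : ℝ) (s : Fin N → Fin M) :
    (Matrix.of fun (i j : Fin N) => k (s j) ^ (i : ℕ) * Real.exp (k (s j) * x)).det
    = (∏ p ∈ Finset.univ.filter (fun p : Fin N × Fin N => p.1 < p.2),
        (k (s p.2) - k (s p.1))) * Real.exp (∑ j, k (s j) * x) := by
  have h1 : (Matrix.of fun (i j : Fin N) => k (s j) ^ (i : ℕ) * Real.exp (k (s j) * x))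
      = Matrix.of fun (i j : Fin N) =>
          Real.exp (k (s j) * x) * ((Matrix.vandermonde (fun j => k (s j)))ᵀ i j) := by
    ext i j
    simp [Matrix.vandermonde, mul_comm]
  rw [h1, Matrix.det_mul_row, Matrix.det_transpose, Matrix.det_vandermonde, Real.exp_sum,
    ← prod_pairs (fun i j => k (s j) - k (s i))]
  ring

/-- Binet–Cauchy expansion of the Wronskian of sums of exponentials:
`Wr(f_1,…,f_N)(x) = ∑_{m_1<⋯<m_N} V(m) A(m) exp((k_{m_1}+⋯+k_{m_N}) x)`. -/
theorem wronskian_eq_sum_minors (N M : ℕ) (hNM : N ≤ M)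
    (A : Matrix (Fin N) (Fin M) ℝ) (k : Fin M → ℝ) (x : ℝ) :
    (Matrix.of fun (i n : Fin N) =>
        iteratedDeriv (i : ℕ) (fun z => ∑ m, A n m * Real.exp (k m * z)) x).det
    = ∑ s ∈ Finset.univ.filter (fun s : Fin N → Fin M => StrictMono s),
        (∏ p ∈ Finset.univ.filter (fun p : Fin N × Fin N => p.1 < p.2),
            (k (s p.2) - k (s p.1)))
        * (A.submatrix id s).det
        * Real.exp (∑ j, k (s j) * x) := by
  set V : Matrix (Fin N) (Fin M) ℝ :=
    Matrix.of fun (i : Fin N) (m : Fin M) => k m ^ (i : ℕ) * Real.exp (k m * x) with hV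
  have hW : (Matrix.of fun (i n : Fin N) =>
      iteratedDeriv (i : ℕ) (fun z => ∑ m, A n m * Real.exp (k m * z)) x) = V * Aᵀ := by
    ext i n
    rw [Matrix.of_apply, iteratedDeriv_sum_exp, Matrix.mul_apply]
    exact Finset.sum_congr rfl fun m _ => by
      simp only [hV, Matrix.of_apply, Matrix.transpose_apply]; ring
  rw [hW, cauchy_binet]
  refine Finset.sum_congr rfl fun s hs => ?_
  have hVs : V.submatrix id s
      = Matrix.of fun (i j : Fin N) => k (s j) ^ (i : ℕ) * Real.exp (k (s j) * x) := by
    ext i j; simp [hV, Matrix.submatrix_apply]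
  have hAs : (Aᵀ.submatrix s id).det = (A.submatrix id s).det := by
    rw [← Matrix.transpose_submatrix, Matrix.det_transpose]
  rw [hVs, hAs, vandermonde_exp_det]
  ring
end

section
/- Suppose k_1 < ⋯ < k_M and all N×N minors A(m_1,…,m_N) of the N×M matrix A are nonnegative, with at least one strictly positive. Then the tau-function τ(x) = Σ_{m_1<⋯<m_N} V(m_1,…,m_N) A(m_1,…,m_N) e^{(k_{m_1}+⋯+k_{m_N})x} is strictly positive for all real x. -/
open scoped Classical

/-- If `k_1 < ⋯ < k_M` and all maximal minors of `A` are
nonnegative with at least one strictly positive, then the tau-function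
`τ(x) = ∑ V(m) A(m) exp((k_{m_1}+⋯+k_{m_N}) x)` is strictly positive. -/
theorem tau_pos (N M : ℕ) (hNM : N ≤ M) (A : Matrix (Fin N) (Fin M) ℝ)
    (k : Fin M → ℝ) (hk : StrictMono k)
    (hnonneg : ∀ s : Fin N → Fin M, StrictMono s → 0 ≤ (A.submatrix id s).det)
    (hpos : ∃ s : Fin N → Fin M, StrictMono s ∧ 0 < (A.submatrix id s).det)
    (x : ℝ) :
    0 < ∑ s ∈ Finset.univ.filter (fun s : Fin N → Fin M => StrictMono s),
        (∏ p ∈ Finset.univ.filter (fun p : Fin N × Fin N => p.1 < p.2),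
            (k (s p.2) - k (s p.1)))
        * (A.submatrix id s).det
        * Real.exp ((∑ j, k (s j)) * x) := by
  have hV : ∀ s : Fin N → Fin M, StrictMono s →
      0 < ∏ p ∈ Finset.univ.filter (fun p : Fin N × Fin N => p.1 < p.2),
        (k (s p.2) - k (s p.1)) := by
    intro s hs
    apply Finset.prod_pos
    intro p hp
    simp only [Finset.mem_filter] at hp
    exact sub_pos.mpr (hk (hs hp.2))
  obtain ⟨s₀, hs₀, hd₀⟩ := hpos
  apply Finset.sum_pos'
  · intro s hs
    simp only [Finset.mem_filter] at hs
    exact mul_nonneg (mul_nonneg (hV s hs.2).le (hnonneg s hs.2)) (Real.exp_pos _).le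
  · refine ⟨s₀, by simp [hs₀], ?_⟩
    exact mul_pos (mul_pos (hV s₀ hs₀) hd₀) (Real.exp_pos _)
end

section
/- Suppose k_1 < ⋯ < k_M, N ≤ M, and all N×N minors of A are nonnegative with rank(A) = N. Then for every finite y, t, as x → −∞, the dominant phase combination of τ = Σ V(m_1,…,m_N) A(m_1,…,m_N) e^{θ_{m_1,…,m_N}} is the one with nonzero minor minimizing k_{m_1} + ⋯ + k_{m_N}; precisely, if (m_1*,…,m_N*) attains the strict minimum of Σ_j k_{m_j} over tuples with A(m_1,…,m_N) ≠ 0, then τ(x,y,t) · e^{−θ_{m_1*,…,m_N*}(x,y,t)} → V(m_1*,…,m_N*) A(m_1*,…,m_N*) as x → −∞ with y, t fixed. -/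
open scoped Classical

/-- With `k_1 < ⋯ < k_M`, `rank A = N` and all maximal minors
nonnegative, if the increasing tuple `s⋆` (with nonzero minor) strictly
minimizes `∑_j k_{m_j}` among tuples with nonzero minor, then as `x → -∞`
with `y, t` fixed, `τ e^{-θ_{s⋆}} → V(s⋆) A(s⋆)`: the phase combination of
`s⋆` dominates. -/
theorem dominant_phase_at_minus_infinity (N M : ℕ) (hNM : N ≤ M)
    (A : Matrix (Fin N) (Fin M) ℝ) (k θ₀ : Fin M → ℝ) (hk : StrictMono k)
    (hrank : A.rank = N)
    (hnonneg : ∀ s : Fin N → Fin M, StrictMono s → 0 ≤ (A.submatrix id s).det)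
    (sstar : Fin N → Fin M) (hsstar : StrictMono sstar)
    (hne : (A.submatrix id sstar).det ≠ 0)
    (hmin : ∀ s : Fin N → Fin M, StrictMono s → (A.submatrix id s).det ≠ 0 →
      s ≠ sstar → (∑ j, k (sstar j)) < ∑ j, k (s j))
    (y t : ℝ) :
    Filter.Tendsto (fun x : ℝ =>
        (∑ s ∈ Finset.univ.filter (fun s : Fin N → Fin M => StrictMono s),
          (∏ p ∈ Finset.univ.filter (fun p : Fin N × Fin N => p.1 < p.2),
              (k (s p.2) - k (s p.1)))
          * (A.submatrix id s).det
          * Real.exp (∑ j, (k (s j) * x + k (s j) ^ 2 * y + k (s j) ^ 3 * t + θ₀ (s j))))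
        * Real.exp (-(∑ j, (k (sstar j) * x + k (sstar j) ^ 2 * y
            + k (sstar j) ^ 3 * t + θ₀ (sstar j)))))
      Filter.atBot
      (nhds ((∏ p ∈ Finset.univ.filter (fun p : Fin N × Fin N => p.1 < p.2),
          (k (sstar p.2) - k (sstar p.1))) * (A.submatrix id sstar).det)) := by
  classical
  set S := Finset.univ.filter (fun s : Fin N → Fin M => StrictMono s) with hS
  set V : (Fin N → Fin M) → ℝ := fun s =>
    ∏ p ∈ Finset.univ.filter (fun p : Fin N × Fin N => p.1 < p.2),
      (k (s p.2) - k (s p.1)) with hVdef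
  set K : (Fin N → Fin M) → ℝ := fun s => ∑ j, k (s j) with hKdef
  set C : (Fin N → Fin M) → ℝ := fun s =>
    ∑ j, (k (s j) ^ 2 * y + k (s j) ^ 3 * t + θ₀ (s j)) with hCdef
  have hexp : ∀ (s : Fin N → Fin M) (x : ℝ),
      (∑ j, (k (s j) * x + k (s j) ^ 2 * y + k (s j) ^ 3 * t + θ₀ (s j)))
        = K s * x + C s := by
    intro s x
    simp only [hKdef, hCdef, Finset.sum_mul, Finset.sum_add_distrib]
    ring
  have hfun : ∀ x : ℝ,
      (∑ s ∈ S, V s * (A.submatrix id s).det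
          * Real.exp (∑ j, (k (s j) * x + k (s j) ^ 2 * y + k (s j) ^ 3 * t + θ₀ (s j))))
        * Real.exp (-(∑ j, (k (sstar j) * x + k (sstar j) ^ 2 * y
            + k (sstar j) ^ 3 * t + θ₀ (sstar j))))
      = ∑ s ∈ S, V s * (A.submatrix id s).det
          * Real.exp ((K s - K sstar) * x + (C s - C sstar)) := by
    intro x
    rw [Finset.sum_mul]
    refine Finset.sum_congr rfl fun s _ => ?_
    rw [hexp s x, hexp sstar x, mul_assoc, ← Real.exp_add]
    congr 2
    ring
  have hmem : sstar ∈ S := by simp [hS, hsstar]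
  have hlim : ∀ s ∈ S,
      Filter.Tendsto (fun x : ℝ => V s * (A.submatrix id s).det
          * Real.exp ((K s - K sstar) * x + (C s - C sstar)))
        Filter.atBot
        (nhds (if s = sstar then V sstar * (A.submatrix id sstar).det else 0)) := by
    intro s hs
    by_cases h1 : s = sstar
    · subst h1
      simp only [sub_self, zero_mul, zero_add, Real.exp_zero, mul_one, if_pos rfl]
      exact tendsto_const_nhds
    · rw [if_neg h1]
      by_cases h2 : (A.submatrix id s).det = 0
      · simp only [h2, mul_zero, zero_mul]
        exact tendsto_const_nhds
      · have hsm : StrictMono s := by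
          simpa [hS] using hs
        have hKlt : K sstar < K s := hmin s hsm h2 h1
        have hpos : (0:ℝ) < K s - K sstar := by linarith
        have h3 : Filter.Tendsto (fun x : ℝ => (K s - K sstar) * x + (C s - C sstar))
            Filter.atBot Filter.atBot := by
          apply Filter.tendsto_atBot_add_const_right
          exact (Filter.tendsto_id (α := ℝ)).const_mul_atBot hpos
        have h4 := Real.tendsto_exp_atBot.comp h3
        have h5 := h4.const_mul (V s * (A.submatrix id s).det)
        simpa [mul_assoc] using h5
  have hsum := tendsto_finset_sum S hlim
  rw [Finset.sum_ite_eq' S sstar, if_pos hmem] at hsum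
  refine Filter.Tendsto.congr (fun x => (hfun x).symm) ?_
  exact hsum
end
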